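/- Let P be a finite p-group and Q ≤ P a non-abelian subgroup of order p³ and exponent p with C_P(Q) = Z(Q). Then the second center Z₂(P) of P is contained in Q. -/

import Mathlib

-- Aux lemma: in a group of order p^3, a subgroup containing a subgroup K of order p^2
-- together with an element outside K must be everything.
lemma auxA {p : ℕ} (hp : p.Prime) {G : Type*} [Group G] [Finite G]
    (hG : Nat.card G = p ^ 3) (K : Subgroup G) (hK : Nat.card K = p ^ 2)
    (q₀ : G) (hq₀ : q₀ ∉ K) (C : Subgroup G) (hKC : K ≤ C) (hq₀C : q₀ ∈ C) : C = ⊤ := by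
  set J := K ⊔ Subgroup.zpowers q₀ with hJ
  have hKJ : K ≤ J := le_sup_left
  have hq₀J : q₀ ∈ J := hJ ▸ Subgroup.mem_sup_right (Subgroup.mem_zpowers q₀)
  have hJdvd : Nat.card J ∣ p ^ 3 := hG ▸ Subgroup.card_subgroup_dvd_card J
  obtain ⟨m, hm3, hJm⟩ := (Nat.dvd_prime_pow hp).1 hJdvd
  have hp2dvd : p ^ 2 ∣ p ^ m := hK ▸ hJm ▸ Subgroup.card_dvd_of_le hKJ
  have h2m : 2 ≤ m := (Nat.pow_dvd_pow_iff_le_right hp.one_lt).1 hp2dvd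
  have hJtop : J = ⊤ := by
    interval_cases m
    · exact absurd (Subgroup.eq_of_le_of_card_ge hKJ (by rw [hK, hJm])) (by
        intro h; exact hq₀ (h ▸ hq₀J))
    · exact Subgroup.eq_top_of_card_eq _ (by rw [hJm, hG])
  have : J ≤ C := sup_le hKC ((Subgroup.zpowers_le).2 hq₀C)
  rw [hJtop] at this
  exact top_le_iff.1 this

-- The center of a nonabelian group of order p^3 has order p.
lemma auxB {p : ℕ} (hp : p.Prime) {G : Type*} [Group G] [Finite G]
    (hG : Nat.card G = p ^ 3) (hna : ¬ ∀ a b : G, a * b = b * a) :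
    Nat.card (Subgroup.center G) = p := by
  haveI : Fact p.Prime := ⟨hp⟩
  obtain ⟨k, hk0, hk⟩ := IsPGroup.card_center_eq_prime_pow hG (by norm_num)
  have hk3 : k ≤ 3 := by
    have : p ^ k ∣ p ^ 3 := hk ▸ hG ▸ Subgroup.card_subgroup_dvd_card _
    exact (Nat.pow_dvd_pow_iff_le_right hp.one_lt).1 this
  interval_cases k
  · rw [hk, pow_one]
  · -- center of order p^2 : quotient is cyclic of prime order
    exfalso
    have hq : Nat.card (G ⧸ Subgroup.center G) = p := by
      have h := Subgroup.card_eq_card_quotient_mul_card_subgroup (Subgroup.center G)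
      rw [hG, hk] at h
      have hp0 : p ≠ 0 := hp.ne_zero
      have : p ^ 3 = Nat.card (G ⧸ Subgroup.center G) * p ^ 2 := h
      nlinarith [Nat.pos_of_ne_zero hp0, sq_nonneg p,
        Nat.eq_of_mul_eq_mul_right (Nat.pow_pos (n := 2) (Nat.pos_of_ne_zero hp0))
          (by rw [← this]; ring : Nat.card (G ⧸ Subgroup.center G) * p ^ 2 = p * p ^ 2)]
    have : IsCyclic (G ⧸ Subgroup.center G) := isCyclic_of_prime_card (p := p) hq
    exact hna (commutative_of_cyclic_center_quotient (QuotientGroup.mk' (Subgroup.center G))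
      (le_of_eq (QuotientGroup.ker_mk' _)))
  · exfalso
    have : Subgroup.center G = ⊤ := Subgroup.eq_top_of_card_eq _ (by rw [hk, hG])
    exact hna fun a b => by
      have ha : a ∈ Subgroup.center G := this ▸ Subgroup.mem_top a
      exact (Subgroup.mem_center_iff.1 ha b).symm

-- In a group of order p^3 with center of order p, commutators lie in the center.
lemma auxC {p : ℕ} (hp : p.Prime) {G : Type*} [Group G] [Finite G]
    (hG : Nat.card G = p ^ 3) (hZ : Nat.card (Subgroup.center G) = p)
    (a b : G) : a * b * a⁻¹ * b⁻¹ ∈ Subgroup.center G := by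
  haveI : Fact p.Prime := ⟨hp⟩
  have hq : Nat.card (G ⧸ Subgroup.center G) = p ^ 2 := by
    have h := Subgroup.card_eq_card_quotient_mul_card_subgroup (Subgroup.center G)
    rw [hG, hZ] at h
    have hp0 : 0 < p := hp.pos
    have : p ^ 2 * p = Nat.card (G ⧸ Subgroup.center G) * p := by rw [← h]; ring
    exact (Nat.eq_of_mul_eq_mul_right hp0 this).symm
  have hcomm := IsPGroup.commutative_of_card_eq_prime_sq (p := p) hq
  have : (QuotientGroup.mk' (Subgroup.center G)) (a * b * a⁻¹ * b⁻¹) = 1 := by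
    simp only [map_mul, map_inv]
    rw [hcomm ((QuotientGroup.mk' (Subgroup.center G)) a) ((QuotientGroup.mk' (Subgroup.center G)) b)]
    group
  rwa [← QuotientGroup.ker_mk' (Subgroup.center G), MonoidHom.mem_ker]

/-- Let `P` be a finite `p`-group and `Q ≤ P` non-abelian of order `p³` and exponent `p`
with `C_P(Q) = Z(Q)`. Then `Z₂(P) ≤ Q`. -/
theorem stmt7 (p : ℕ) [Fact p.Prime] (P : Type*) [Group P] [Finite P] (hP : IsPGroup p P)
    (Q : Subgroup P) (hcard : Nat.card Q = p ^ 3)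
    (hna : ¬ ∀ a b : Q, a * b = b * a)
    (hexp : Monoid.exponent Q = p)
    (hcent : Subgroup.centralizer (Q : Set P) = Subgroup.map Q.subtype (Subgroup.center Q)) :
    upperCentralSeries P 2 ≤ Q := by
  have hp' : p.Prime := Fact.out
  intro z hz
  have hz' : ∀ y : P, z * y * z⁻¹ * y⁻¹ ∈ Subgroup.center P := by
    have h2 : z ∈ Subgroup.upperCentralSeries P (1 + 1) := hz
    rw [mem_upperCentralSeries_succ_iff] at h2
    intro y
    have := h2 y
    rwa [upperCentralSeries_one] at this
  have hzmem : ∀ y : P, y * z * y⁻¹ * z⁻¹ ∈ Subgroup.center P := by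
    intro y
    have h := inv_mem (hz' y)
    have he : (z * y * z⁻¹ * y⁻¹)⁻¹ = y * z * y⁻¹ * z⁻¹ := by group
    rwa [he] at h
  -- cardinalities
  have hZQ : Nat.card (Subgroup.center ↥Q) = p := auxB hp' hcard hna
  have hMcard : Nat.card (Subgroup.map Q.subtype (Subgroup.center ↥Q)) = p := by
    rw [← hZQ]
    exact (Nat.card_congr ((Subgroup.center ↥Q).equivMapOfInjective Q.subtype
      Q.subtype_injective).toEquiv).symm
  haveI : Nontrivial ↥Q := by
    rw [← Finite.one_lt_card_iff_nontrivial, hcard]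
    exact Nat.one_lt_pow (by norm_num) hp'.one_lt
  haveI : Nontrivial P := by
    obtain ⟨x, hx⟩ := exists_ne (1 : ↥Q)
    exact ⟨⟨(x : P), 1, fun h => hx (by rwa [← OneMemClass.coe_eq_one])⟩⟩
  haveI := hP.center_nontrivial
  have hcenterP : Subgroup.center P = Subgroup.map Q.subtype (Subgroup.center ↥Q) := by
    have h1 : Subgroup.center P ≤ Subgroup.map Q.subtype (Subgroup.center ↥Q) :=
      hcent ▸ Subgroup.center_le_centralizer (Q : Set P)
    have hd : Nat.card (Subgroup.center P) ∣ p := hMcard ▸ Subgroup.card_dvd_of_le h1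
    rcases (hp'.eq_one_or_self_of_dvd _ hd) with h | h
    · exact absurd h (by
        rw [Nat.card_eq_one_iff_unique]
        rintro ⟨hsub, -⟩
        exact (not_subsingleton _) hsub)
    · exact Subgroup.eq_of_le_of_card_ge h1 (le_of_eq (by rw [h, hMcard]))
  -- the homomorphism F : Q → center P, q ↦ [q, z]
  have hcc : ∀ c : ↥(Subgroup.center P), ∀ g : P, g * (c : P) = (c : P) * g :=
    fun c g => Subgroup.mem_center_iff.1 c.2 g
  let F : ↥Q →* ↥(Subgroup.center P) :=
  { toFun := fun q => ⟨(q : P) * z * (q : P)⁻¹ * z⁻¹, hzmem q⟩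
    map_one' := by ext; simp
    map_mul' := by
      intro a b
      ext
      show ((a * b : ↥Q) : P) * z * ((a * b : ↥Q) : P)⁻¹ * z⁻¹
          = ((a : P) * z * (a : P)⁻¹ * z⁻¹) * ((b : P) * z * (b : P)⁻¹ * z⁻¹)
      push_cast
      set A := (a : P)
      set B := (b : P)
      have h1 : B * z = (B * z * B⁻¹ * z⁻¹) * (z * B) := by group
      have h2 : A * (B * z * B⁻¹ * z⁻¹) = (B * z * B⁻¹ * z⁻¹) * A :=
        hcc ⟨_, hzmem B⟩ A
      calc A * B * z * (A * B)⁻¹ * z⁻¹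
          = A * (B * z) * (B⁻¹ * A⁻¹) * z⁻¹ := by group
        _ = A * ((B * z * B⁻¹ * z⁻¹) * (z * B)) * (B⁻¹ * A⁻¹) * z⁻¹ := by rw [← h1]
        _ = A * (B * z * B⁻¹ * z⁻¹) * (z * A⁻¹ * z⁻¹) := by group
        _ = (B * z * B⁻¹ * z⁻¹) * A * (z * A⁻¹ * z⁻¹) := by rw [h2]
        _ = (B * z * B⁻¹ * z⁻¹) * (A * z * A⁻¹ * z⁻¹) := by group
        _ = (A * z * A⁻¹ * z⁻¹) * (B * z * B⁻¹ * z⁻¹) := (hcc ⟨_, hzmem B⟩ _).symm }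
  have hFval : ∀ q : ↥Q, (F q : P) = (q : P) * z * (q : P)⁻¹ * z⁻¹ := fun q => rfl
  by_cases hker : F.ker = ⊤
  · -- z centralizes Q
    have hzc : z ∈ Subgroup.centralizer (Q : Set P) := by
      rw [Subgroup.mem_centralizer_iff]
      intro g hg
      have hm : (⟨g, hg⟩ : ↥Q) ∈ F.ker := hker ▸ Subgroup.mem_top _
      have : g * z * g⁻¹ * z⁻¹ = 1 := by
        have := congrArg (Subtype.val) ((F.mem_ker).1 hm)
        simpa [hFval] using this
      calc g * z = (g * z * g⁻¹ * z⁻¹) * (z * g) := by group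
        _ = z * g := by rw [this]; group
    rw [hcent] at hzc
    exact Subgroup.map_subtype_le _ hzc
  · -- main case
    -- card of center P
    have hcP : Nat.card (Subgroup.center P) = p := by rw [hcenterP]; exact hMcard
    have hqcard : Nat.card (↥Q ⧸ F.ker) = Nat.card F.range :=
      Nat.card_congr (QuotientGroup.quotientKerEquivRange F).toEquiv
    have hmul := Subgroup.card_eq_card_quotient_mul_card_subgroup F.ker
    have hr_dvd : Nat.card F.range ∣ p := hcP ▸ Subgroup.card_subgroup_dvd_card F.range
    have hkercard : Nat.card F.ker = p ^ 2 := by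
      rcases hp'.eq_one_or_self_of_dvd _ hr_dvd with h | h
      · exfalso
        apply hker
        apply Subgroup.eq_top_of_card_eq
        rw [hcard, hqcard, h, one_mul] at hmul
        rw [← hmul, hcard]
      · rw [hcard, hqcard, h] at hmul
        have h2 : p * p ^ 2 = p * Nat.card F.ker := by rw [← hmul]; ring
        exact (Nat.eq_of_mul_eq_mul_left hp'.pos h2).symm
    obtain ⟨q₀, hq₀⟩ : ∃ q₀ : ↥Q, q₀ ∉ F.ker := by
      by_contra h
      push_neg at h
      exact hker ((Subgroup.eq_top_iff' F.ker).2 h)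
    have hZK : Subgroup.center ↥Q ≤ F.ker := by
      intro x hx
      have hxM : (↑x : P) ∈ Subgroup.center P := by
        rw [hcenterP]; exact ⟨x, hx, rfl⟩
      have hcom := Subgroup.mem_center_iff.1 hxM z
      rw [F.mem_ker]
      apply Subtype.ext
      show (x : P) * z * (x : P)⁻¹ * z⁻¹ = 1
      rw [← hcom]
      group
    have hcommQ := auxC hp' hcard hZQ
    let Fq : ↥F.ker →* ↥(Subgroup.center ↥Q) :=
    { toFun := fun k => ⟨q₀ * (k : ↥Q) * q₀⁻¹ * ((k : ↥Q))⁻¹, hcommQ q₀ k⟩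
      map_one' := by ext; simp
      map_mul' := by
        intro a b
        apply Subtype.ext
        show q₀ * ((a * b : ↥F.ker) : ↥Q) * q₀⁻¹ * (((a * b : ↥F.ker) : ↥Q))⁻¹
            = (q₀ * (a : ↥Q) * q₀⁻¹ * ((a : ↥Q))⁻¹) * (q₀ * (b : ↥Q) * q₀⁻¹ * ((b : ↥Q))⁻¹)
        push_cast
        set A := ((a : ↥Q)) with hA
        set B := ((b : ↥Q)) with hB
        have h2 : A * (q₀ * B * q₀⁻¹ * B⁻¹) = (q₀ * B * q₀⁻¹ * B⁻¹) * A :=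
          Subgroup.mem_center_iff.1 (hcommQ q₀ B) A
        calc q₀ * (A * B) * q₀⁻¹ * (A * B)⁻¹
            = (q₀ * A * q₀⁻¹ * A⁻¹) * (A * (q₀ * B * q₀⁻¹ * B⁻¹) * A⁻¹) := by group
          _ = (q₀ * A * q₀⁻¹ * A⁻¹) * ((q₀ * B * q₀⁻¹ * B⁻¹) * A * A⁻¹) := by rw [h2]
          _ = (q₀ * A * q₀⁻¹ * A⁻¹) * (q₀ * B * q₀⁻¹ * B⁻¹) := by group }
    have hFqval : ∀ k : ↥F.ker, (Fq k : ↥Q) = q₀ * (k : ↥Q) * q₀⁻¹ * ((k : ↥Q))⁻¹ :=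
      fun k => rfl
    have hFqnt : Fq.range ≠ ⊥ := by
      intro hbot
      have hallc : F.ker ≤ Subgroup.centralizer {q₀} := by
        intro k hk
        rw [Subgroup.mem_centralizer_iff]
        intro w hw
        rw [Set.mem_singleton_iff] at hw
        rw [hw]
        have h1 : Fq ⟨k, hk⟩ = 1 := by
          have h2 : Fq ⟨k, hk⟩ ∈ Fq.range := ⟨_, rfl⟩
          rwa [hbot, Subgroup.mem_bot] at h2
        have h2 : q₀ * k * q₀⁻¹ * k⁻¹ = 1 := Subtype.ext_iff.1 h1
        calc q₀ * k = (q₀ * k * q₀⁻¹ * k⁻¹) * (k * q₀) := by group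
          _ = k * q₀ := by rw [h2]; group
      have htop := auxA hp' hcard F.ker hkercard q₀ hq₀ _ hallc (by
        rw [Subgroup.mem_centralizer_iff]
        intro w hw
        rw [Set.mem_singleton_iff] at hw
        rw [hw])
      have hq₀c : q₀ ∈ Subgroup.center ↥Q := by
        rw [Subgroup.mem_center_iff]
        intro g
        have hgc : g ∈ Subgroup.centralizer {q₀} := htop ▸ Subgroup.mem_top g
        exact (Subgroup.mem_centralizer_iff.1 hgc q₀ rfl).symm
      exact hq₀ (hZK hq₀c)
    have hrt : Fq.range = ⊤ := by
      have hd : Nat.card Fq.range ∣ p := hZQ ▸ Subgroup.card_subgroup_dvd_card Fq.range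
      rcases hp'.eq_one_or_self_of_dvd _ hd with h | h
      · exact absurd (Subgroup.card_eq_one.1 h) hFqnt
      · exact Subgroup.eq_top_of_card_eq _ (by rw [h, hZQ])
    set c := F q₀ with hcdef
    obtain ⟨cx, hcx, hcxe⟩ : ∃ cx ∈ Subgroup.center ↥Q, Q.subtype cx = (c : P) := by
      have h2 : (c : P) ∈ Subgroup.map Q.subtype (Subgroup.center ↥Q) := hcenterP ▸ c.2
      exact h2
    obtain ⟨g, hg⟩ : ∃ g : ↥F.ker, Fq g = ⟨cx, hcx⟩ := by
      have h2 : (⟨cx, hcx⟩ : ↥(Subgroup.center ↥Q)) ∈ Fq.range := hrt ▸ Subgroup.mem_top _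
      exact h2
    have habel : ∀ a b : ↥F.ker, a * b = b * a :=
      IsPGroup.commutative_of_card_eq_prime_sq (p := p) hkercard
    set g₀ : ↥Q := (g : ↥Q) with hg₀def
    have hcPc : ∀ w : P, w * (c : P) = (c : P) * w := fun w => Subgroup.mem_center_iff.1 c.2 w
    have e1 : (q₀ : P) * z * ((q₀ : P))⁻¹ * z⁻¹ = (c : P) := rfl
    have e2 : (q₀ : P) * (g₀ : P) * ((q₀ : P))⁻¹ * ((g₀ : P))⁻¹ = (c : P) := by
      have h2 := congrArg (fun x : ↥(Subgroup.center ↥Q) => ((x : ↥Q) : P)) hg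
      simp only [hFqval] at h2
      rw [hg₀def, ← hcxe]
      push_cast at h2 ⊢
      exact h2
    set z' := z * ((g₀ : P))⁻¹ with hz'def
    have hC : Subgroup.comap Q.subtype (Subgroup.centralizer {z'}) = ⊤ := by
      apply auxA hp' hcard F.ker hkercard q₀ hq₀
      · intro k hk
        rw [Subgroup.mem_comap, Subgroup.mem_centralizer_iff]
        intro w hw
        rw [Set.mem_singleton_iff] at hw
        rw [hw]
        have hkz : Commute (k : P) z := by
          have h2 : (k : P) * z * ((k : P))⁻¹ * z⁻¹ = 1 := Subtype.ext_iff.1 ((MonoidHom.mem_ker (f := F)).1 hk)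
          show (k : P) * z = z * (k : P)
          calc (k : P) * z = ((k : P) * z * ((k : P))⁻¹ * z⁻¹) * (z * (k : P)) := by group
            _ = z * (k : P) := by rw [h2]; group
        have hkg : Commute (k : P) (g₀ : P) := by
          have h3 : (⟨k, hk⟩ : ↥F.ker) * g = g * ⟨k, hk⟩ := habel _ _
          have h4 := congrArg (fun x : ↥F.ker => ((x : ↥Q) : P)) h3
          push_cast at h4
          exact h4
        have hcm : Commute (k : P) z' := hkz.mul_right hkg.inv_right
        exact hcm.symm.eq
      · rw [Subgroup.mem_comap, Subgroup.mem_centralizer_iff]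
        intro w hw
        rw [Set.mem_singleton_iff] at hw
        rw [hw]
        have s1 : SemiconjBy (q₀ : P) z ((c : P) * z) := by
          show (q₀ : P) * z = (c : P) * z * (q₀ : P)
          rw [← e1]; group
        have s2 : SemiconjBy (q₀ : P) (g₀ : P) ((c : P) * (g₀ : P)) := by
          show (q₀ : P) * (g₀ : P) = (c : P) * (g₀ : P) * (q₀ : P)
          rw [← e2]; group
        have s3 : SemiconjBy (q₀ : P) z' ((c : P) * z * ((c : P) * (g₀ : P))⁻¹) :=
          s1.mul_right s2.inv_right
        have h4 : (c : P) * z * ((c : P) * (g₀ : P))⁻¹ = z' := by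
          rw [hz'def, mul_inv_rev]
          calc (c : P) * z * (((g₀ : P))⁻¹ * ((c : P))⁻¹)
              = (c : P) * (z * ((g₀ : P))⁻¹) * ((c : P))⁻¹ := by group
            _ = (z * ((g₀ : P))⁻¹) * (c : P) * ((c : P))⁻¹ := by rw [← hcPc (z * ((g₀ : P))⁻¹)]
            _ = z * ((g₀ : P))⁻¹ := by group
        rw [h4] at s3
        exact s3.eq.symm
    have hz'c : z' ∈ Subgroup.centralizer (Q : Set P) := by
      rw [Subgroup.mem_centralizer_iff]
      intro w hw
      have h2 : (⟨w, hw⟩ : ↥Q) ∈ Subgroup.comap Q.subtype (Subgroup.centralizer {z'}) :=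
        hC ▸ Subgroup.mem_top _
      exact (Subgroup.mem_centralizer_iff.1 (Subgroup.mem_comap.1 h2) z' rfl).symm
    rw [hcent] at hz'c
    have hz'Q : z' ∈ Q := Subgroup.map_subtype_le _ hz'c
    have hzz : z = z' * (g₀ : P) := by rw [hz'def]; group
    rw [hzz]
    exact Q.mul_mem hz'Q g₀.2
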